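/- Set e_1 = x_1 and e_j = 2x_j − x_1 in S_n for 2 ≤ j ≤ n. For every permutation σ of {1,…,n} and every function ε : {1,…,n} → {1,−1}, there exists a unique graded ring automorphism φ of S_n satisfying φ(e_i) = ε(i)·e_{σ(i)} for all i = 1,…,n. -/

import Mathlib

/-!
Context: for n ≥ 1, S_n := ℤ[x_1,…,x_n]/(x_1², x_j² − x_1 x_j : j = 2,…,n).
The degree-2 part H² of S_n is the free abelian group with basis x_1,…,x_n.
A graded ring automorphism of S_n is a ring automorphism mapping H² onto H².

STATEMENT 12: Set e_1 = x_1 and e_j = 2x_j − x_1 in S_n for 2 ≤ j ≤ n.  For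
every permutation σ of {1,…,n} and every function ε : {1,…,n} → {1,−1}, there
exists a unique graded ring automorphism φ of S_n satisfying
φ(e_i) = ε(i)·e_{σ(i)} for all i = 1,…,n.
-/

open MvPolynomial

set_option synthInstance.maxHeartbeats 1000000
set_option maxHeartbeats 2000000


noncomputable section

/-- The defining relations x_1², x_j² − x_1 x_j (j ≥ 2) of S_n. -/
def srel (n : ℕ) (j : Fin n) : MvPolynomial (Fin n) ℤ :=
  X j ^ 2 -
    (if j.val = 0 then 0
      else X (⟨0, Nat.lt_of_le_of_lt (Nat.zero_le _) j.isLt⟩ : Fin n)) * X j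

/-- S_n = ℤ[x_1,…,x_n]/(x_1², x_j² − x_1 x_j : j = 2,…,n). -/
abbrev SRing (n : ℕ) : Type :=
  MvPolynomial (Fin n) ℤ ⧸ Ideal.span (Set.range (srel n))

/-- The image x_i of X i in S_n. -/
def sx (n : ℕ) (i : Fin n) : SRing n :=
  Ideal.Quotient.mk _ (X i)

/-- e_1 = x_1 and e_j = 2x_j − x_1 for j ≥ 2. -/
def se (n : ℕ) [NeZero n] (i : Fin n) : SRing n :=
  if i = 0 then sx n 0 else 2 • sx n i - sx n 0

variable (n : ℕ) [NeZero n]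

lemma srel_eq (j : Fin n) :
    srel n j = X j ^ 2 - (if j = 0 then 0 else X 0) * X j := by
  unfold srel
  congr 1
  by_cases h : j = 0
  · rw [if_pos h, if_pos (by simp [h])]
  · rw [if_neg h, if_neg (fun h' => h (Fin.ext (by rw [h']; simp)))]
    congr 2

lemma sx_sq_zero : sx n 0 ^ 2 = 0 := by
  have h : Ideal.Quotient.mk (Ideal.span (Set.range (srel n))) (srel n 0) = 0 :=
    Ideal.Quotient.eq_zero_iff_mem.mpr (Ideal.subset_span ⟨0, rfl⟩)
  rw [srel_eq, if_pos rfl, zero_mul, sub_zero, map_pow] at h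
  exact h

lemma sx_sq (j : Fin n) (h : j ≠ 0) : sx n j ^ 2 = sx n 0 * sx n j := by
  have h2 : Ideal.Quotient.mk (Ideal.span (Set.range (srel n))) (srel n j) = 0 :=
    Ideal.Quotient.eq_zero_iff_mem.mpr (Ideal.subset_span ⟨j, rfl⟩)
  rw [srel_eq, if_neg h, map_sub, map_pow, map_mul, sub_eq_zero] at h2
  exact h2


def gk (k : Fin n) : SRing n →+* DualNumber ℤ :=
  Ideal.Quotient.lift _
    (eval₂Hom (Int.castRingHom _) (fun i => if i = k then DualNumber.eps else 0))
    (by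
      intro p hp
      refine RingHom.mem_ker.mp (Ideal.span_le.mpr ?_ hp)
      rintro _ ⟨j, rfl⟩
      rw [SetLike.mem_coe, RingHom.mem_ker]
      have key : ∀ a b : Fin n, (if a = k then DualNumber.eps else (0:DualNumber ℤ)) *
          (if b = k then DualNumber.eps else 0) = 0 := by
        intro a b
        split_ifs <;> simp [DualNumber.eps_mul_eps]
      by_cases h : (j : ℕ) = 0 <;>
        simp only [srel, h, if_true, if_false, map_sub, map_pow, map_mul, map_zero,
          zero_mul, sub_zero, eval₂Hom_X', pow_two, key, sub_self] )

lemma gk_sx (k i : Fin n) :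
    gk n k (sx n i) = if i = k then DualNumber.eps else 0 := by
  simp [gk, sx]

lemma sx_inj (c : Fin n → ℤ) (h : ∑ i, c i • sx n i = 0) : ∀ k, c k = 0 := by
  intro k
  have h2 := congrArg (gk n k) h
  rw [map_sum, map_zero] at h2
  simp only [map_zsmul, gk_sx] at h2
  simp only [smul_ite, smul_zero] at h2
  rw [Finset.sum_ite_eq' Finset.univ k (fun i => c i • DualNumber.eps)] at h2
  simp only [Finset.mem_univ, if_true] at h2
  have h3 := congrArg TrivSqZeroExt.snd h2
  simpa using h3

/-- sign attached to index k : e_k = ssg k • x_0 + 2 • st k -/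
def ssg (k : Fin n) : ℤ := if k = 0 then 1 else -1

def st (k : Fin n) : SRing n := if k = 0 then 0 else sx n k

lemma se_eq (k : Fin n) : se n k = ssg n k • sx n 0 + 2 • st n k := by
  unfold se ssg st
  split_ifs with h
  · simp
  · rw [neg_smul, one_smul]
    abel

lemma ssg_pm (k : Fin n) : ssg n k = 1 ∨ ssg n k = -1 := by
  unfold ssg; split_ifs <;> simp

lemma pm_mul (a b : ℤ) (ha : a = 1 ∨ a = -1) (hb : b = 1 ∨ b = -1) :
    a * b = 1 ∨ a * b = -1 := by
  rcases ha with rfl | rfl <;> rcases hb with rfl | rfl <;> norm_num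

lemma sx0_mul_self : sx n 0 * sx n 0 = 0 := by
  rw [← pow_two]; exact sx_sq_zero n

lemma st_mul_self (k : Fin n) : st n k * st n k = sx n 0 * st n k := by
  unfold st
  split_ifs with h
  · simp
  · rw [← pow_two]; exact sx_sq n k h

lemma st_sign (k : Fin n) :
    ((1 + ssg n k : ℤ) : SRing n) * st n k = 0 := by
  unfold ssg st
  split_ifs with h <;> simp

variable (σ : Equiv.Perm (Fin n)) (ε : Fin n → ℤ)

def coefm (j : Fin n) : ℤ := (ε j * ssg n (σ j) + ε 0 * ssg n (σ 0)) / 2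

def Yv (j : Fin n) : SRing n :=
  coefm n σ ε j • sx n 0 + ε j • st n (σ j) + ε 0 • st n (σ 0)

lemma two_coefm (hε : ∀ i, ε i = 1 ∨ ε i = -1) (j : Fin n) :
    2 * coefm n σ ε j = ε j * ssg n (σ j) + ε 0 * ssg n (σ 0) := by
  have h1 := pm_mul _ _ (hε j) (ssg_pm n (σ j))
  have h2 := pm_mul _ _ (hε 0) (ssg_pm n (σ 0))
  unfold coefm
  rcases h1 with h1 | h1 <;> rcases h2 with h2 | h2 <;> rw [h1, h2] <;> decide

lemma coefm_zero : coefm n σ ε 0 = ε 0 * ssg n (σ 0) := by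
  unfold coefm; omega

lemma Yv_zero : Yv n σ ε 0 = ε 0 • se n (σ 0) := by
  rw [Yv, coefm_zero, se_eq, smul_add, smul_smul, two_smul ℕ, smul_add, add_assoc]

-- cast-mul form of Yv
lemma Yv_eq (j : Fin n) :
    Yv n σ ε j = (coefm n σ ε j : SRing n) * sx n 0
      + (ε j : SRing n) * st n (σ j) + (ε 0 : SRing n) * st n (σ 0) := by
  simp [Yv, zsmul_eq_mul]

lemma eps_sq (hε : ∀ i, ε i = 1 ∨ ε i = -1) (i : Fin n) :
    ((ε i : ℤ) : SRing n) * (ε i : SRing n) = 1 := by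
  rcases hε i with h | h <;> rw [h] <;> norm_num

lemma Yrel_zero (hε : ∀ i, ε i = 1 ∨ ε i = -1) : Yv n σ ε 0 ^ 2 = 0 := by
  have hA := sx0_mul_self n
  have hL := st_mul_self n (σ 0)
  have hl := st_sign n (σ 0)
  push_cast at hl
  rw [Yv_eq, coefm_zero]
  push_cast
  set A := sx n 0
  set L := st n (σ 0)
  set v : SRing n := ((ε 0 : ℤ) : SRing n)
  set sl : SRing n := ((ssg n (σ 0) : ℤ) : SRing n)
  linear_combination (v^2*sl^2) * hA + (4*v^2) * hL + (4*v^2*A) * hl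

lemma Yrel (hε : ∀ i, ε i = 1 ∨ ε i = -1) (j : Fin n) (hj : j ≠ 0) :
    Yv n σ ε j ^ 2 = Yv n σ ε 0 * Yv n σ ε j := by
  have hA := sx0_mul_self n
  have hK := st_mul_self n (σ j)
  have hL := st_mul_self n (σ 0)
  have hk := st_sign n (σ j)
  have hl := st_sign n (σ 0)
  have hu : ((ε j : ℤ) : SRing n) * (ε j : SRing n) = 1 := eps_sq n ε hε j
  have hv : ((ε 0 : ℤ) : SRing n) * (ε 0 : SRing n) = 1 := eps_sq n ε hε 0
  have hm0 := two_coefm n σ ε hε j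
  have hm : ((2 * coefm n σ ε j : ℤ) : SRing n)
      = ((ε j * ssg n (σ j) + ε 0 * ssg n (σ 0) : ℤ) : SRing n) := by
    exact_mod_cast congrArg _ hm0
  push_cast at hm hk hl
  rw [Yv_eq, Yv_eq, coefm_zero]
  push_cast
  set A := sx n 0
  set K := st n (σ j)
  set L := st n (σ 0)
  set u : SRing n := ((ε j : ℤ) : SRing n)
  set v : SRing n := ((ε 0 : ℤ) : SRing n)
  set sk : SRing n := ((ssg n (σ j) : ℤ) : SRing n)
  set sl : SRing n := ((ssg n (σ 0) : ℤ) : SRing n)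
  set m : SRing n := ((coefm n σ ε j : ℤ) : SRing n)
  linear_combination (m^2 - v*sl*m) * hA + u^2 * hK + (-(v^2)) * hL
    + ((1+sk)*A*K) * hu + (u*A*K) * hm + A * hk + (-(v^2)*A) * hl

-- continuing: cast form of se, two_Yv, Phi, spans, cancellation

lemma se_cast (k : Fin n) :
    se n k = (ssg n k : SRing n) * sx n 0 + 2 * st n k := by
  rw [se_eq]
  simp [zsmul_eq_mul, nsmul_eq_mul]

lemma two_Yv (hε : ∀ i, ε i = 1 ∨ ε i = -1) (j : Fin n) :
    Yv n σ ε j + Yv n σ ε j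
      = (ε j : SRing n) * se n (σ j) + (ε 0 : SRing n) * se n (σ 0) := by
  have hm0 := two_coefm n σ ε hε j
  have hm : ((2 * coefm n σ ε j : ℤ) : SRing n)
      = ((ε j * ssg n (σ j) + ε 0 * ssg n (σ 0) : ℤ) : SRing n) := by
    exact_mod_cast congrArg _ hm0
  push_cast at hm
  rw [Yv_eq, se_cast, se_cast]
  linear_combination (sx n 0) * hm

lemma sx_two (i : Fin n) : sx n i + sx n i = se n i + se n 0 := by
  unfold se
  split_ifs with h h2 h3
  · rw [h]
  · exact absurd rfl h2
  · rw [two_smul]; abel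
  · exact absurd rfl h3

-- the lifted ring hom
def Fhom : MvPolynomial (Fin n) ℤ →+* SRing n :=
  eval₂Hom (Int.castRingHom _) (Yv n σ ε)

lemma F_srel (hε : ∀ i, ε i = 1 ∨ ε i = -1) (j : Fin n) :
    Fhom n σ ε (srel n j) = 0 := by
  rw [srel_eq]
  by_cases h : j = 0
  · subst h
    rw [if_pos rfl, zero_mul, sub_zero, map_pow]
    have hX : Fhom n σ ε (X 0) = Yv n σ ε 0 := eval₂Hom_X' _ _ _
    rw [hX]
    exact Yrel_zero n σ ε hε
  · simp only [if_neg h, map_sub, map_pow, map_mul, Fhom, eval₂Hom_X']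
    rw [sub_eq_zero]
    exact Yrel n σ ε hε j h

def Phi (hε : ∀ i, ε i = 1 ∨ ε i = -1) : SRing n →+* SRing n :=
  Ideal.Quotient.lift _ (Fhom n σ ε)
    (by
      intro p hp
      refine RingHom.mem_ker.mp (Ideal.span_le.mpr ?_ hp)
      rintro _ ⟨j, rfl⟩
      exact RingHom.mem_ker.mpr (F_srel n σ ε hε j))

lemma Phi_sx (hε : ∀ i, ε i = 1 ∨ ε i = -1) (i : Fin n) :
    Phi n σ ε hε (sx n i) = Yv n σ ε i := by
  simp [Phi, sx, Fhom]

lemma Phi_se (hε : ∀ i, ε i = 1 ∨ ε i = -1) (i : Fin n) :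
    Phi n σ ε hε (se n i) = ε i • se n (σ i) := by
  by_cases h : i = 0
  · subst h
    rw [show se n 0 = sx n 0 by rw [se, if_pos rfl], Phi_sx, Yv_zero]
  · rw [show se n i = 2 • sx n i - sx n 0 by rw [se, if_neg h],
      map_sub, map_nsmul, Phi_sx, Phi_sx, Yv_zero, two_smul ℕ,
      two_Yv n σ ε hε i]
    simp only [zsmul_eq_mul]
    ring

lemma Yv_mem (j : Fin n) :
    Yv n σ ε j ∈ Submodule.span ℤ (Set.range (sx n)) := by
  have hx : ∀ k : Fin n, sx n k ∈ Submodule.span ℤ (Set.range (sx n)) :=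
    fun k => Submodule.subset_span ⟨k, rfl⟩
  have hst : ∀ k : Fin n, st n k ∈ Submodule.span ℤ (Set.range (sx n)) := by
    intro k
    unfold st
    split_ifs
    · exact Submodule.zero_mem _
    · exact hx k
  exact Submodule.add_mem _
    (Submodule.add_mem _ (Submodule.smul_mem _ _ (hx 0))
      (Submodule.smul_mem _ _ (hst (σ j))))
    (Submodule.smul_mem _ _ (hst (σ 0)))

lemma Phi_span (hε : ∀ i, ε i = 1 ∨ ε i = -1) (z : SRing n)
    (hz : z ∈ Submodule.span ℤ (Set.range (sx n))) :
    Phi n σ ε hε z ∈ Submodule.span ℤ (Set.range (sx n)) := by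
  induction hz using Submodule.span_induction with
  | mem x hx =>
      obtain ⟨i, rfl⟩ := hx
      rw [Phi_sx]
      exact Yv_mem n σ ε i
  | zero => simpa using Submodule.zero_mem _
  | add x y _ _ hx hy => rw [map_add]; exact Submodule.add_mem _ hx hy
  | smul c x _ hx => rw [map_zsmul]; exact Submodule.smul_mem _ _ hx

lemma spans_cancel (z w : SRing n)
    (hz : z ∈ Submodule.span ℤ (Set.range (sx n)))
    (hw : w ∈ Submodule.span ℤ (Set.range (sx n)))
    (h : z + z = w + w) : z = w := by
  rw [Submodule.mem_span_range_iff_exists_fun] at hz hw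
  obtain ⟨c, hc⟩ := hz
  obtain ⟨d, hd⟩ := hw
  have key : ∑ i, ((c i + c i) - (d i + d i)) • sx n i = 0 := by
    simp only [sub_smul, add_smul, Finset.sum_sub_distrib, Finset.sum_add_distrib, hc, hd]
    rw [h, sub_self]
  have h2 := sx_inj n _ key
  have h3 : ∀ i, c i = d i := fun i => by have := h2 i; omega
  rw [← hc, ← hd]
  exact Finset.sum_congr rfl fun i _ => by rw [h3 i]

lemma Phi_congr (σ₁ σ₂ : Equiv.Perm (Fin n)) (ε₁ ε₂ : Fin n → ℤ)
    (h₁ : ∀ i, ε₁ i = 1 ∨ ε₁ i = -1) (h₂ : ∀ i, ε₂ i = 1 ∨ ε₂ i = -1)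
    (hσ : σ₁ = σ₂) (he : ε₁ = ε₂) : Phi n σ₁ ε₁ h₁ = Phi n σ₂ ε₂ h₂ := by
  subst hσ; subst he; rfl

lemma Phi_comp (hε : ∀ i, ε i = 1 ∨ ε i = -1) :
    (Phi n σ⁻¹ (ε ∘ ⇑σ⁻¹) (fun i => hε _)).comp (Phi n σ ε hε) = RingHom.id _ := by
  set ε' : Fin n → ℤ := ε ∘ ⇑σ⁻¹ with hε'def
  set hε' : ∀ i, ε' i = 1 ∨ ε' i = -1 := fun i => hε _
  apply Ideal.Quotient.ringHom_ext
  apply MvPolynomial.ringHom_ext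
  · intro r
    have hC : (C r : MvPolynomial (Fin n) ℤ) = (r : MvPolynomial (Fin n) ℤ) :=
      eq_intCast (C : ℤ →+* MvPolynomial (Fin n) ℤ) r
    simp [hC, map_intCast]
  · intro i
    show (Phi n σ⁻¹ ε' hε') (Phi n σ ε hε (sx n i)) = sx n i
    rw [Phi_sx]
    apply spans_cancel n _ _
      (Phi_span n σ⁻¹ ε' hε' _ (Yv_mem n σ ε i))
      (Submodule.subset_span ⟨i, rfl⟩)
    have expand : (Phi n σ⁻¹ ε' hε') (Yv n σ ε i) + (Phi n σ⁻¹ ε' hε') (Yv n σ ε i)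
        = (ε i : SRing n) * ((Phi n σ⁻¹ ε' hε') (se n (σ i)))
          + (ε 0 : SRing n) * ((Phi n σ⁻¹ ε' hε') (se n (σ 0))) := by
      rw [← map_add, two_Yv n σ ε hε i, map_add, map_mul, map_mul,
        map_intCast, map_intCast]
    rw [expand, Phi_se, Phi_se]
    have h1 : ε' (σ i) = ε i := by simp [hε'def]
    have h2 : ε' (σ 0) = ε 0 := by simp [hε'def]
    have h3 : σ⁻¹ (σ i) = i := σ.symm_apply_apply i
    have h4 : σ⁻¹ (σ 0) = 0 := σ.symm_apply_apply 0
    rw [h1, h2, h3, h4, sx_two]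
    have e1 : ((ε i : ℤ) : SRing n) * (ε i • se n i) = se n i := by
      rw [zsmul_eq_mul, ← mul_assoc, eps_sq n ε hε i, one_mul]
    have e2 : ((ε 0 : ℤ) : SRing n) * (ε 0 • se n 0) = se n 0 := by
      rw [zsmul_eq_mul, ← mul_assoc, eps_sq n ε hε 0, one_mul]
    rw [e1, e2]

theorem exists_unique_graded_automorphism' (hε : ∀ i, ε i = 1 ∨ ε i = -1) :
    ∃! φ : SRing n ≃+* SRing n,
      φ '' (Submodule.span ℤ (Set.range (sx n)) : Set (SRing n))
          = (Submodule.span ℤ (Set.range (sx n)) : Set (SRing n)) ∧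
      ∀ i, φ (se n i) = ε i • se n (σ i) := by
  set ε' : Fin n → ℤ := ε ∘ ⇑σ⁻¹ with hε'def
  set hε' : ∀ i, ε' i = 1 ∨ ε' i = -1 := fun i => hε _
  have hcomp1 := Phi_comp n σ ε hε
  have hcomp2 : (Phi n σ ε hε).comp (Phi n σ⁻¹ ε' hε') = RingHom.id _ := by
    have := Phi_comp n σ⁻¹ ε' hε'
    have heq : Phi n σ⁻¹⁻¹ (ε' ∘ ⇑σ⁻¹⁻¹) (fun i => hε' _) = Phi n σ ε hε :=
      Phi_congr n _ _ _ _ _ _ (inv_inv σ) (by funext i; simp [hε'def])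
    rw [heq] at this
    exact this
  refine ⟨RingEquiv.ofRingHom (Phi n σ ε hε) (Phi n σ⁻¹ ε' hε') hcomp2 hcomp1,
    ⟨?_, ?_⟩, ?_⟩
  · apply Set.Subset.antisymm
    · rintro _ ⟨z, hz, rfl⟩
      exact Phi_span n σ ε hε z hz
    · intro w hw
      refine ⟨Phi n σ⁻¹ ε' hε' w, Phi_span n σ⁻¹ ε' hε' w hw, ?_⟩
      exact RingHom.congr_fun hcomp2 w
  · intro i
    exact Phi_se n σ ε hε i
  · rintro φ' ⟨himg, hse⟩
    have hhom : (φ' : SRing n →+* SRing n) = Phi n σ ε hε := by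
      apply Ideal.Quotient.ringHom_ext
      apply MvPolynomial.ringHom_ext
      · intro r
        have hC : (C r : MvPolynomial (Fin n) ℤ) = (r : MvPolynomial (Fin n) ℤ) :=
          eq_intCast (C : ℤ →+* MvPolynomial (Fin n) ℤ) r
        simp [hC, map_intCast]
      · intro i
        show φ' (sx n i) = Phi n σ ε hε (sx n i)
        rw [Phi_sx]
        have hmem : φ' (sx n i) ∈ Submodule.span ℤ (Set.range (sx n)) := by
          have h1 : sx n i ∈ (Submodule.span ℤ (Set.range (sx n)) : Set (SRing n)) :=
            Submodule.subset_span ⟨i, rfl⟩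
          have h2 := Set.mem_image_of_mem (⇑φ') h1
          rw [himg] at h2
          exact h2
        apply spans_cancel n _ _ hmem (Yv_mem n σ ε i)
        rw [← map_add, sx_two, map_add, hse i, hse 0, two_Yv n σ ε hε i]
        simp only [zsmul_eq_mul]
    exact RingEquiv.ext fun z => RingHom.congr_fun hhom z

theorem exists_unique_graded_automorphism (n : ℕ) [NeZero n]
    (σ : Equiv.Perm (Fin n)) (ε : Fin n → ℤ) (hε : ∀ i, ε i = 1 ∨ ε i = -1) :
    ∃! φ : SRing n ≃+* SRing n,
      φ '' (Submodule.span ℤ (Set.range (sx n)) : Set (SRing n))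
          = (Submodule.span ℤ (Set.range (sx n)) : Set (SRing n)) ∧
      ∀ i, φ (se n i) = ε i • se n (σ i) :=
  exists_unique_graded_automorphism' n σ ε hε

end
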